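/- Let M be an n × m random matrix (n ≤ m) with jointly independent complex entries of zero mean and unit variance. Then E[det(ε I_n + (1/m) M M*)] ≥ m!/((m−n)! m^n) for every ε ≥ 0. -/

import Mathlib

open MeasureTheory ProbabilityTheory Matrix

namespace Stmt7Aux

variable {Ω : Type*} [MeasurableSpace Ω] {μ : Measure Ω}

lemma integrable_conj' {f : Ω → ℂ} (hf : Integrable f μ) :
    Integrable (fun ω => (starRingEnd ℂ) (f ω)) μ :=
  Integrable.mono' hf.norm (RCLike.continuous_conj.comp_aestronglyMeasurable hf.1)
    (Filter.Eventually.of_forall fun ω => by simp)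

lemma indep_integral_mul {X Y : Ω → ℂ} (h : IndepFun X Y μ)
    (hX : Integrable X μ) (hY : Integrable Y μ) :
    ∫ ω, X ω * Y ω ∂μ = (∫ ω, X ω ∂μ) * ∫ ω, Y ω ∂μ := by
  have hXY : Integrable (fun ω => X ω * Y ω) μ := h.integrable_mul hX hY
  have hXre : Integrable (fun ω => (X ω).re) μ := by simpa using hX.re
  have hXim : Integrable (fun ω => (X ω).im) μ := by simpa using hX.im
  have hYre : Integrable (fun ω => (Y ω).re) μ := by simpa using hY.re
  have hYim : Integrable (fun ω => (Y ω).im) μ := by simpa using hY.im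
  have h11 := (h.comp Complex.measurable_re Complex.measurable_re).integral_fun_mul_eq_mul_integral hXre.1 hYre.1
  have h12 := (h.comp Complex.measurable_re Complex.measurable_im).integral_fun_mul_eq_mul_integral hXre.1 hYim.1
  have h21 := (h.comp Complex.measurable_im Complex.measurable_re).integral_fun_mul_eq_mul_integral hXim.1 hYre.1
  have h22 := (h.comp Complex.measurable_im Complex.measurable_im).integral_fun_mul_eq_mul_integral hXim.1 hYim.1
  simp only [Function.comp_def] at h11 h12 h21 h22
  have i11 : Integrable (fun ω => (X ω).re * (Y ω).re) μ :=
    (h.comp Complex.measurable_re Complex.measurable_re).integrable_mul hXre hYre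
  have i12 : Integrable (fun ω => (X ω).re * (Y ω).im) μ :=
    (h.comp Complex.measurable_re Complex.measurable_im).integrable_mul hXre hYim
  have i21 : Integrable (fun ω => (X ω).im * (Y ω).re) μ :=
    (h.comp Complex.measurable_im Complex.measurable_re).integrable_mul hXim hYre
  have i22 : Integrable (fun ω => (X ω).im * (Y ω).im) μ :=
    (h.comp Complex.measurable_im Complex.measurable_im).integrable_mul hXim hYim
  have e1 : (∫ ω, X ω * Y ω ∂μ).re = ∫ ω, (X ω * Y ω).re ∂μ := by
    simpa using (integral_re hXY).symm
  have e1' : (∫ ω, X ω * Y ω ∂μ).im = ∫ ω, (X ω * Y ω).im ∂μ := by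
    simpa using (integral_im hXY).symm
  have e2 : (∫ ω, X ω ∂μ).re = ∫ ω, (X ω).re ∂μ := by simpa using (integral_re hX).symm
  have e3 : (∫ ω, X ω ∂μ).im = ∫ ω, (X ω).im ∂μ := by simpa using (integral_im hX).symm
  have e4 : (∫ ω, Y ω ∂μ).re = ∫ ω, (Y ω).re ∂μ := by simpa using (integral_re hY).symm
  have e5 : (∫ ω, Y ω ∂μ).im = ∫ ω, (Y ω).im ∂μ := by simpa using (integral_im hY).symm
  apply Complex.ext
  · rw [e1, Complex.mul_re, e2, e3, e4, e5]
    calc ∫ ω, (X ω * Y ω).re ∂μ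
        = ∫ ω, ((X ω).re * (Y ω).re - (X ω).im * (Y ω).im) ∂μ := by
          simp only [Complex.mul_re]
      _ = (∫ ω, (X ω).re * (Y ω).re ∂μ) - ∫ ω, (X ω).im * (Y ω).im ∂μ :=
          integral_sub i11 i22
      _ = _ := by rw [h11, h22]
  · rw [e1', Complex.mul_im, e2, e3, e4, e5]
    calc ∫ ω, (X ω * Y ω).im ∂μ
        = ∫ ω, ((X ω).re * (Y ω).im + (X ω).im * (Y ω).re) ∂μ := by
          simp only [Complex.mul_im]
      _ = (∫ ω, (X ω).re * (Y ω).im ∂μ) + ∫ ω, (X ω).im * (Y ω).re ∂μ :=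
          integral_add i12 i21
      _ = _ := by rw [h12, h21]

lemma indep_integral_prod [IsProbabilityMeasure μ] {ι : Type*} [DecidableEq ι]
    {F : ι → Ω → ℂ} (hind : iIndepFun F μ)
    (hmeas : ∀ i, Measurable (F i)) (hint : ∀ i, Integrable (F i) μ) :
    ∀ s : Finset ι, Integrable (fun ω => ∏ i ∈ s, F i ω) μ ∧
      ∫ ω, ∏ i ∈ s, F i ω ∂μ = ∏ i ∈ s, ∫ ω, F i ω ∂μ := by
  intro s
  induction s using Finset.induction with
  | empty => constructor <;> simp
  | @insert a s ha ih =>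
    have hIndep : IndepFun (∏ j ∈ s, F j) (F a) μ :=
      hind.indepFun_finsetProd_of_notMem hmeas ha
    have hprodInt : Integrable (fun ω => ∏ j ∈ s, F j ω) μ := ih.1
    have hprodInt' : Integrable (∏ j ∈ s, F j) μ := by
      have heq : (fun ω => ∏ j ∈ s, F j ω) = ∏ j ∈ s, F j := by
        funext ω; simp
      rwa [heq] at hprodInt
    constructor
    · have := hIndep.symm.integrable_mul (hint a) hprodInt'
      have heq : (F a * ∏ j ∈ s, F j) = fun ω => ∏ i ∈ insert a s, F i ω := by
        funext ω
        simp [Finset.prod_insert ha, Finset.prod_apply]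
      rwa [heq] at this
    · have hmul : ∫ ω, F a ω * (∏ j ∈ s, F j) ω ∂μ
          = (∫ ω, F a ω ∂μ) * ∫ ω, (∏ j ∈ s, F j) ω ∂μ :=
        indep_integral_mul hIndep.symm (hint a) hprodInt'
      simp only [Finset.prod_apply] at hmul
      have h0 : ∫ ω, ∏ i ∈ insert a s, F i ω ∂μ = ∫ ω, F a ω * ∏ j ∈ s, F j ω ∂μ := by
        simp only [Finset.prod_insert ha]
      rw [h0, hmul, Finset.prod_insert ha, ih.2]

end Stmt7Aux

namespace Stmt7Aux

open Classical in
noncomputable def dAux (c : ℝ) {n m : ℕ} (i : Fin n) (x : Fin m ⊕ Fin n) : ℂ :=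
  Sum.elim (fun _ => (1:ℂ)) (fun j => if i = j then (c:ℂ) else 0) x

noncomputable def DAux (c : ℝ) {n m : ℕ} (g : Fin n → Fin m ⊕ Fin n) : ℂ :=
  ∏ i, dAux c i (g i)

open Classical in
noncomputable def IvalAux {n m : ℕ} (g f : Fin n → Fin m ⊕ Fin n) (p : Fin n × Fin m) : ℂ :=
  if g p.1 = Sum.inl p.2 then (if f p.1 = Sum.inl p.2 then 1 else 0)
  else (if f p.1 = Sum.inl p.2 then 0 else 1)

def Qf {n m : ℕ} (f : Fin n → Fin m ⊕ Fin n) (s : Finset (Fin n))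
    (σ : Equiv.Perm (Fin n)) : Prop :=
  (∀ i ∈ s, σ i = i) ∧ ∀ i, f (σ i) = f i

open Classical in
lemma sum_sign_eq_zero {n m : ℕ} (f : Fin n → Fin m ⊕ Fin n) (s : Finset (Fin n)) (C : ℝ)
    (a b : Fin n) (hab : a ≠ b) (hfab : f a = f b) (ha : a ∉ s) (hb : b ∉ s) :
    ∑ σ : Equiv.Perm (Fin n),
      (if Qf f s σ then ((Equiv.Perm.sign σ : ℤ) : ℝ) * C else 0) = 0 := by
  apply Finset.sum_ninvolution (fun σ => σ * Equiv.swap a b)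
  · -- sum of pairs is zero
    intro σ
    have hQ : ∀ τ : Equiv.Perm (Fin n), Qf f s τ → Qf f s (τ * Equiv.swap a b) := by
      intro τ hτ
      constructor
      · intro i hi
        have hia : i ≠ a := fun h => ha (h ▸ hi)
        have hib : i ≠ b := fun h => hb (h ▸ hi)
        have : (τ * Equiv.swap a b) i = τ i := by
          simp [Equiv.Perm.mul_apply, Equiv.swap_apply_of_ne_of_ne hia hib]
        rw [this]; exact hτ.1 i hi
      · intro i
        have h1 : f ((τ * Equiv.swap a b) i) = f (Equiv.swap a b i) := by
          simp only [Equiv.Perm.mul_apply]; exact hτ.2 (Equiv.swap a b i)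
        rw [h1]
        rcases eq_or_ne i a with rfl | hia
        · rw [Equiv.swap_apply_left]; exact hfab.symm
        rcases eq_or_ne i b with rfl | hib
        · rw [Equiv.swap_apply_right]; exact hfab
        · rw [Equiv.swap_apply_of_ne_of_ne hia hib]
    have hQiff : Qf f s (σ * Equiv.swap a b) ↔ Qf f s σ := by
      constructor
      · intro h
        have := hQ _ h
        simpa [mul_assoc, Equiv.swap_mul_self] using this
      · exact hQ σ
    by_cases hq : Qf f s σ
    · rw [if_pos hq, if_pos (hQiff.mpr hq)]
      have hs : Equiv.Perm.sign (σ * Equiv.swap a b) = -Equiv.Perm.sign σ := by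
        rw [Equiv.Perm.sign_mul, Equiv.Perm.sign_swap hab, mul_neg_one]
      rw [hs]
      push_cast
      ring
    · rw [if_neg hq, if_neg (fun h => hq (hQiff.mp h))]; ring
  · intro σ _
    intro h
    have := congrArg (fun τ : Equiv.Perm (Fin n) => τ a) h
    simp only [Equiv.Perm.mul_apply, Equiv.swap_apply_left] at this
    exact hab (σ.injective this).symm
  · intro σ; exact Finset.mem_univ _
  · intro σ
    simp [mul_assoc, Equiv.swap_mul_self]

end Stmt7Aux

namespace Stmt7Aux

open Classical in
lemma key {Ω : Type*} [MeasurableSpace Ω] (μ : Measure Ω) [IsProbabilityMeasure μ]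
    (n m : ℕ) (M : Ω → Matrix (Fin n) (Fin m) ℂ)
    (hmeas : ∀ i j, Measurable (fun ω => M ω i j))
    (hindep : iIndepFun
      (fun (p : Fin n × Fin m) ω => M ω p.1 p.2) μ)
    (hmean : ∀ i j, ∫ ω, M ω i j ∂μ = 0)
    (hvar : ∀ i j, ∫ ω, ‖M ω i j‖ ^ 2 ∂μ = 1)
    (c : ℝ)
    (N : Ω → Matrix (Fin n) (Fin m ⊕ Fin n) ℂ)
    (hN : ∀ ω i, N ω i = Sum.elim (M ω i) (fun j => if i = j then (c:ℂ) else 0)) :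
    (m.descFactorial n : ℝ) ≤ (∫ ω, (N ω * (N ω)ᴴ).det ∂μ).re := by
  -- basic integrability
  have hIntSq : ∀ i j, Integrable (fun ω => ‖M ω i j‖ ^ 2) μ := by
    intro i j
    by_contra h
    have := hvar i j
    rw [integral_undef h] at this
    exact one_ne_zero this.symm
  have hInt : ∀ i j, Integrable (fun ω => M ω i j) μ := by
    intro i j
    refine Integrable.mono' ((integrable_const (1:ℝ)).add (hIntSq i j))
      (hmeas i j).aestronglyMeasurable (Filter.Eventually.of_forall fun ω => ?_)
    have h1 : ‖M ω i j‖ ≤ 1 + ‖M ω i j‖ ^ 2 := by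
      nlinarith [norm_nonneg (M ω i j), sq_nonneg (‖M ω i j‖ - 1)]
    simpa using h1
  -- entrywise expansion of N
  have hNentry : ∀ ω i (x : Fin m ⊕ Fin n),
      N ω i x = dAux c i x * ∏ k : Fin m, (if x = Sum.inl k then M ω i k else 1) := by
    intro ω i x
    rw [hN]
    cases x with
    | inl k0 => simp [dAux, Sum.inl.injEq, Finset.prod_ite_eq]
    | inr j => simp [dAux]
  have hdconj : ∀ (i : Fin n) (x : Fin m ⊕ Fin n),
      (starRingEnd ℂ) (dAux c i x) = dAux c i x := by
    intro i x
    cases x with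
    | inl k0 => simp [dAux]
    | inr j => simp [dAux, apply_ite (starRingEnd ℂ)]
  have hConjEntry : ∀ ω i (x : Fin m ⊕ Fin n),
      (starRingEnd ℂ) (N ω i x)
        = dAux c i x * ∏ k : Fin m, (if x = Sum.inl k then (starRingEnd ℂ) (M ω i k) else 1) := by
    intro ω i x
    rw [hNentry ω i x, _root_.map_mul, map_prod, hdconj]
    congr 1
    exact Finset.prod_congr rfl fun k _ => by split_ifs <;> simp
  -- the elementary factor family
  set h2fun : (Fin n → Fin m ⊕ Fin n) → (Fin n → Fin m ⊕ Fin n) → (Fin n × Fin m) → Ω → ℂ :=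
    fun g f p ω => (if g p.1 = Sum.inl p.2 then M ω p.1 p.2 else 1)
      * (if f p.1 = Sum.inl p.2 then (starRingEnd ℂ) (M ω p.1 p.2) else 1) with hh2
  -- product identity
  have hW : ∀ (g f : Fin n → Fin m ⊕ Fin n) ω,
      (∏ i, N ω i (g i)) * (∏ i, (starRingEnd ℂ) (N ω i (f i)))
        = (DAux c g * DAux c f) * ∏ p : Fin n × Fin m, h2fun g f p ω := by
    intro g f ω
    have h1 : (∏ i, N ω i (g i))
        = DAux c g * ∏ p : Fin n × Fin m, (if g p.1 = Sum.inl p.2 then M ω p.1 p.2 else 1) := by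
      calc ∏ i, N ω i (g i)
          = ∏ i, (dAux c i (g i) * ∏ k : Fin m, (if g i = Sum.inl k then M ω i k else 1)) :=
            Finset.prod_congr rfl fun i _ => hNentry ω i (g i)
        _ = (∏ i, dAux c i (g i)) * ∏ i, ∏ k : Fin m, (if g i = Sum.inl k then M ω i k else 1) :=
            Finset.prod_mul_distrib
        _ = _ := by rw [DAux, Fintype.prod_prod_type]
    have h2 : (∏ i, (starRingEnd ℂ) (N ω i (f i)))
        = DAux c f * ∏ p : Fin n × Fin m,
            (if f p.1 = Sum.inl p.2 then (starRingEnd ℂ) (M ω p.1 p.2) else 1) := by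
      calc ∏ i, (starRingEnd ℂ) (N ω i (f i))
          = ∏ i, (dAux c i (f i)
              * ∏ k : Fin m, (if f i = Sum.inl k then (starRingEnd ℂ) (M ω i k) else 1)) :=
            Finset.prod_congr rfl fun i _ => hConjEntry ω i (f i)
        _ = (∏ i, dAux c i (f i)) * ∏ i, ∏ k : Fin m,
              (if f i = Sum.inl k then (starRingEnd ℂ) (M ω i k) else 1) :=
            Finset.prod_mul_distrib
        _ = _ := by rw [DAux, Fintype.prod_prod_type]
    rw [h1, h2, hh2]
    rw [Finset.prod_mul_distrib]
    ring
  -- measurability, integrability, independence of the factors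
  have hFmeas : ∀ g f p, Measurable (h2fun g f p) := by
    intro g f p
    rw [hh2]
    apply Measurable.mul <;> split_ifs
    · exact hmeas p.1 p.2
    · exact measurable_const
    · exact RCLike.continuous_conj.measurable.comp (hmeas p.1 p.2)
    · exact measurable_const
  have hmc : ∀ (i : Fin n) (j : Fin m),
      (fun ω => M ω i j * (starRingEnd ℂ) (M ω i j))
        = fun ω => ((‖M ω i j‖ ^ 2 : ℝ) : ℂ) := by
    intro i j
    funext ω
    rw [Complex.mul_conj]
    simp [Complex.normSq_eq_norm_sq]
  have hFint : ∀ g f p, Integrable (h2fun g f p) μ := by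
    intro g f p
    rw [hh2]
    dsimp only
    split_ifs with h1 h2 h3
    · rw [hmc p.1 p.2]
      exact (hIntSq p.1 p.2).ofReal
    · simpa using hInt p.1 p.2
    · simpa using integrable_conj' (hInt p.1 p.2)
    · simpa using integrable_const (1:ℂ)
  have hFind : ∀ g f, iIndepFun (h2fun g f) μ := by
    intro g f
    have := hindep.comp
      (fun p (x : ℂ) => (if g p.1 = Sum.inl p.2 then x else 1)
        * (if f p.1 = Sum.inl p.2 then (starRingEnd ℂ) x else 1))
      (fun p => by
        apply Measurable.mul <;> split_ifs
        · exact measurable_id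
        · exact measurable_const
        · exact RCLike.continuous_conj.measurable
        · exact measurable_const)
    exact this
  have hProd : ∀ g f, Integrable (fun ω => ∏ p : Fin n × Fin m, h2fun g f p ω) μ ∧
      ∫ ω, ∏ p : Fin n × Fin m, h2fun g f p ω ∂μ
        = ∏ p : Fin n × Fin m, ∫ ω, h2fun g f p ω ∂μ := by
    intro g f
    exact indep_integral_prod (hFind g f) (hFmeas g f) (hFint g f) Finset.univ
  -- value of each elementary integral
  have hIval : ∀ g f p, ∫ ω, h2fun g f p ω ∂μ = IvalAux g f p := by
    intro g f p
    simp only [IvalAux]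
    by_cases h1 : g p.1 = Sum.inl p.2 <;> by_cases h2 : f p.1 = Sum.inl p.2
    · rw [if_pos h1, if_pos h2]
      have heq : h2fun g f p = fun ω => ((‖M ω p.1 p.2‖ ^ 2 : ℝ) : ℂ) := by
        funext ω
        simp only [hh2, if_pos h1, if_pos h2]
        rw [Complex.mul_conj]
        simp [Complex.normSq_eq_norm_sq]
      simp only [heq]
      have hOR : ∫ ω, ((‖M ω p.1 p.2‖ ^ 2 : ℝ) : ℂ) ∂μ
          = ((∫ ω, ‖M ω p.1 p.2‖ ^ 2 ∂μ : ℝ) : ℂ) := integral_ofReal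
      rw [hOR, hvar p.1 p.2]
      norm_num
    · rw [if_pos h1, if_neg h2]
      have heq : h2fun g f p = fun ω => M ω p.1 p.2 := by
        funext ω
        simp only [hh2, if_pos h1, if_neg h2, mul_one]
      rw [heq, hmean p.1 p.2]
    · rw [if_neg h1, if_pos h2]
      have heq : h2fun g f p = fun ω => (starRingEnd ℂ) (M ω p.1 p.2) := by
        funext ω
        simp only [hh2, if_neg h1, if_pos h2, one_mul]
      rw [heq, integral_conj, hmean p.1 p.2, map_zero]
    · rw [if_neg h1, if_neg h2]
      have heq : h2fun g f p = fun ω => (1:ℂ) := by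
        funext ω
        simp only [hh2, if_neg h1, if_neg h2, mul_one]
      rw [heq]
      simp
  -- Leibniz expansion of the determinant, pointwise
  have hdet : ∀ ω, (N ω * (N ω)ᴴ).det
      = ∑ σ : Equiv.Perm (Fin n), ∑ f : Fin n → Fin m ⊕ Fin n,
          (((Equiv.Perm.sign σ : ℤ) : ℂ) * (DAux c (f ∘ σ.symm) * DAux c f))
            * ∏ p : Fin n × Fin m, h2fun (f ∘ σ.symm) f p ω := by
    intro ω
    rw [Matrix.det_apply']
    refine Finset.sum_congr rfl fun σ _ => ?_
    have hentry : ∀ i : Fin n, (N ω * (N ω)ᴴ) (σ i) i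
        = ∑ k : Fin m ⊕ Fin n, N ω (σ i) k * (starRingEnd ℂ) (N ω i k) := by
      intro i
      simp [Matrix.mul_apply, Matrix.conjTranspose_apply]
    calc ((Equiv.Perm.sign σ : ℤ) : ℂ) * ∏ i, (N ω * (N ω)ᴴ) (σ i) i
        = ((Equiv.Perm.sign σ : ℤ) : ℂ)
            * ∏ i, ∑ k : Fin m ⊕ Fin n, N ω (σ i) k * (starRingEnd ℂ) (N ω i k) := by
          rw [Finset.prod_congr rfl fun i _ => hentry i]
      _ = ((Equiv.Perm.sign σ : ℤ) : ℂ) * ∑ f : Fin n → Fin m ⊕ Fin n,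
            ∏ i, (N ω (σ i) (f i) * (starRingEnd ℂ) (N ω i (f i))) := by
          rw [Fintype.prod_sum]
      _ = ∑ f : Fin n → Fin m ⊕ Fin n, ((Equiv.Perm.sign σ : ℤ) : ℂ)
            * ((∏ i, N ω (σ i) (f i)) * ∏ i, (starRingEnd ℂ) (N ω i (f i))) := by
          rw [Finset.mul_sum]
          exact Finset.sum_congr rfl fun f _ => by rw [Finset.prod_mul_distrib]
      _ = _ := by
          refine Finset.sum_congr rfl fun f _ => ?_
          have hre : ∏ i, N ω (σ i) (f i) = ∏ i, N ω i ((f ∘ σ.symm) i) := by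
            have h0 := Equiv.prod_comp σ (fun j => N ω j (f (σ.symm j)))
            simp only [Equiv.symm_apply_apply] at h0
            simpa [Function.comp] using h0
          rw [hre, hW (f ∘ σ.symm) f ω]
          ring
  -- integrate
  have hX : (∫ ω, (N ω * (N ω)ᴴ).det ∂μ)
      = ∑ σ : Equiv.Perm (Fin n), ∑ f : Fin n → Fin m ⊕ Fin n,
          (((Equiv.Perm.sign σ : ℤ) : ℂ) * (DAux c (f ∘ σ.symm) * DAux c f))
            * ∏ p : Fin n × Fin m, IvalAux (f ∘ σ.symm) f p := by
    have hint1 : ∀ (σ : Equiv.Perm (Fin n)) (f : Fin n → Fin m ⊕ Fin n),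
        Integrable (fun ω => (((Equiv.Perm.sign σ : ℤ) : ℂ)
          * (DAux c (f ∘ σ.symm) * DAux c f)) * ∏ p : Fin n × Fin m, h2fun (f ∘ σ.symm) f p ω) μ :=
      fun σ f => ((hProd (f ∘ σ.symm) f).1).const_mul _
    calc (∫ ω, (N ω * (N ω)ᴴ).det ∂μ)
        = ∫ ω, ∑ σ : Equiv.Perm (Fin n), ∑ f : Fin n → Fin m ⊕ Fin n,
            (((Equiv.Perm.sign σ : ℤ) : ℂ) * (DAux c (f ∘ σ.symm) * DAux c f))
              * ∏ p : Fin n × Fin m, h2fun (f ∘ σ.symm) f p ω ∂μ := by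
          simp only [hdet]
      _ = ∑ σ : Equiv.Perm (Fin n), ∫ ω, ∑ f : Fin n → Fin m ⊕ Fin n,
            (((Equiv.Perm.sign σ : ℤ) : ℂ) * (DAux c (f ∘ σ.symm) * DAux c f))
              * ∏ p : Fin n × Fin m, h2fun (f ∘ σ.symm) f p ω ∂μ :=
          integral_finset_sum _ fun σ _ => integrable_finset_sum _ fun f _ => hint1 σ f
      _ = ∑ σ : Equiv.Perm (Fin n), ∑ f : Fin n → Fin m ⊕ Fin n, ∫ ω,
            (((Equiv.Perm.sign σ : ℤ) : ℂ) * (DAux c (f ∘ σ.symm) * DAux c f))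
              * ∏ p : Fin n × Fin m, h2fun (f ∘ σ.symm) f p ω ∂μ :=
          Finset.sum_congr rfl fun σ _ => integral_finset_sum _ fun f _ => hint1 σ f
      _ = _ := by
          refine Finset.sum_congr rfl fun σ _ => Finset.sum_congr rfl fun f _ => ?_
          rw [integral_const_mul, (hProd (f ∘ σ.symm) f).2]
          congr 1
          exact Finset.prod_congr rfl fun p _ => hIval (f ∘ σ.symm) f p
  -- the inner (per f) lower bound
  have hinner : ∀ f : Fin n → Fin m ⊕ Fin n,
      (if (Function.Injective f ∧ ∀ i, ∃ k, f i = Sum.inl k) then (1:ℝ) else 0)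
        ≤ ∑ σ : Equiv.Perm (Fin n),
            ((((Equiv.Perm.sign σ : ℤ) : ℂ) * (DAux c (f ∘ σ.symm) * DAux c f))
              * ∏ p : Fin n × Fin m, IvalAux (f ∘ σ.symm) f p).re := by
    intro f
    by_cases hAx : ∃ i j, i ≠ j ∧ f i = Sum.inr j
    · obtain ⟨i, j, hij, hfi⟩ := hAx
      have hDf : DAux c f = 0 := by
        apply Finset.prod_eq_zero (Finset.mem_univ i)
        rw [hfi]
        simp [dAux, hij]
      have hGood : ¬(Function.Injective f ∧ ∀ i, ∃ k, f i = Sum.inl k) := by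
        rintro ⟨-, hall⟩
        obtain ⟨k, hk⟩ := hall i
        rw [hfi] at hk
        exact absurd hk (by simp)
      rw [if_neg hGood]
      have hz : ∑ σ : Equiv.Perm (Fin n),
          ((((Equiv.Perm.sign σ : ℤ) : ℂ) * (DAux c (f ∘ σ.symm) * DAux c f))
            * ∏ p : Fin n × Fin m, IvalAux (f ∘ σ.symm) f p).re = 0 :=
        Finset.sum_eq_zero fun σ _ => by rw [hDf]; simp
      rw [hz]
    · push_neg at hAx
      have hdiag : ∀ i j, f i = Sum.inr j → i = j := by
        intro i j h
        by_contra hne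
        exact hAx i j hne h
      set s : Finset (Fin n) := Finset.univ.filter (fun i => f i = Sum.inr i) with hs
      have hmem : ∀ i, i ∈ s ↔ f i = Sum.inr i := by intro i; simp [hs]
      have hinl : ∀ i, i ∉ s → ∃ k, f i = Sum.inl k := by
        intro i hi
        cases hfi : f i with
        | inl k => exact ⟨k, rfl⟩
        | inr j =>
          have hji := hdiag i j hfi
          subst hji
          exact absurd ((hmem i).mpr hfi) hi
      have hDf : DAux c f = (c:ℂ) ^ s.card := by
        rw [DAux]
        have hdi : ∀ i : Fin n, dAux c i (f i) = if i ∈ s then (c:ℂ) else 1 := by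
          intro i
          by_cases hi : i ∈ s
          · rw [if_pos hi, (hmem i).mp hi]
            simp [dAux]
          · obtain ⟨k, hk⟩ := hinl i hi
            rw [if_neg hi, hk]
            simp [dAux]
        rw [Finset.prod_congr rfl fun i _ => hdi i, Fintype.prod_ite_mem, Finset.prod_const]
      have hterm : ∀ σ : Equiv.Perm (Fin n),
          ((((Equiv.Perm.sign σ : ℤ) : ℂ) * (DAux c (f ∘ σ.symm) * DAux c f))
            * ∏ p : Fin n × Fin m, IvalAux (f ∘ σ.symm) f p)
          = if Qf f s σ then
              ((Equiv.Perm.sign σ : ℤ) : ℂ) * ((c:ℂ) ^ s.card * (c:ℂ) ^ s.card)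
            else 0 := by
        intro σ
        by_cases hq1 : ∀ i ∈ s, σ i = i
        · by_cases hq2 : ∀ i, f (σ i) = f i
          · have hq : Qf f s σ := ⟨hq1, hq2⟩
            rw [if_pos hq]
            have hcomp : f ∘ σ.symm = f := by
              funext i
              have h2 := hq2 (σ.symm i)
              rw [Equiv.apply_symm_apply] at h2
              exact h2.symm
            have hone : ∀ p : Fin n × Fin m, IvalAux f f p = 1 := by
              intro p
              by_cases h : f p.1 = Sum.inl p.2 <;> simp [IvalAux, h]
            rw [hcomp, hDf, Finset.prod_congr rfl fun p _ => hone p,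
              Finset.prod_const_one, mul_one]
          · have hq : ¬ Qf f s σ := fun hq => hq2 hq.2
            rw [if_neg hq]
            push_neg at hq2
            obtain ⟨i, hi⟩ := hq2
            have hins : i ∉ s := fun hmem' => hi (by rw [hq1 i hmem'])
            obtain ⟨k, hk⟩ := hinl i hins
            have hzero : ∏ p : Fin n × Fin m, IvalAux (f ∘ σ.symm) f p = 0 := by
              apply Finset.prod_eq_zero (Finset.mem_univ ((σ i, k) : Fin n × Fin m))
              have h1 : (f ∘ σ.symm) (σ i) = Sum.inl k := by
                show f (σ.symm (σ i)) = Sum.inl k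
                rw [Equiv.symm_apply_apply]
                exact hk
              have h2 : f (σ i) ≠ Sum.inl k := fun h => hi (h.trans hk.symm)
              simp [IvalAux, h1, h2, hk]
            rw [hzero, mul_zero]
        · have hq : ¬ Qf f s σ := fun hq => hq1 hq.1
          rw [if_neg hq]
          push_neg at hq1
          obtain ⟨i, hi, hne⟩ := hq1
          have hfi : f i = Sum.inr i := (hmem i).mp hi
          have hzero : DAux c (f ∘ σ.symm) = 0 := by
            apply Finset.prod_eq_zero (Finset.mem_univ (σ i))
            have h1 : (f ∘ σ.symm) (σ i) = Sum.inr i := by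
              show f (σ.symm (σ i)) = Sum.inr i
              rw [Equiv.symm_apply_apply]
              exact hfi
            rw [h1]
            simp [dAux, hne]
          rw [hzero]
          ring
      have hsum : ∑ σ : Equiv.Perm (Fin n),
          ((((Equiv.Perm.sign σ : ℤ) : ℂ) * (DAux c (f ∘ σ.symm) * DAux c f))
            * ∏ p : Fin n × Fin m, IvalAux (f ∘ σ.symm) f p).re
          = ∑ σ : Equiv.Perm (Fin n),
              (if Qf f s σ then
                ((Equiv.Perm.sign σ : ℤ) : ℝ) * (c ^ s.card * c ^ s.card) else 0) := by
        refine Finset.sum_congr rfl fun σ _ => ?_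
        rw [hterm σ]
        by_cases hq : Qf f s σ
        · rw [if_pos hq, if_pos hq]
          have hcast : ((Equiv.Perm.sign σ : ℤ) : ℂ) * ((c:ℂ) ^ s.card * (c:ℂ) ^ s.card)
              = ((((Equiv.Perm.sign σ : ℤ) : ℝ) * (c ^ s.card * c ^ s.card) : ℝ) : ℂ) := by
            push_cast
            ring
          rw [hcast, Complex.ofReal_re]
        · rw [if_neg hq, if_neg hq, Complex.zero_re]
      rw [hsum]
      by_cases hinj : Function.Injective f
      · have hQ1 : ∀ σ : Equiv.Perm (Fin n), Qf f s σ → σ = 1 := by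
          intro σ hσ
          exact Equiv.ext fun i => hinj (hσ.2 i)
        have hval : ∑ σ : Equiv.Perm (Fin n),
            (if Qf f s σ then
              ((Equiv.Perm.sign σ : ℤ) : ℝ) * (c ^ s.card * c ^ s.card) else 0)
            = c ^ s.card * c ^ s.card := by
          rw [Finset.sum_eq_single (1 : Equiv.Perm (Fin n))]
          · have hq1 : Qf f s 1 := ⟨fun i _ => rfl, fun i => rfl⟩
            rw [if_pos hq1]
            simp
          · intro σ _ hσ
            rw [if_neg (fun hq => hσ (hQ1 σ hq))]
          · intro h
            exact absurd (Finset.mem_univ _) h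
        rw [hval]
        by_cases hgood : (Function.Injective f ∧ ∀ i, ∃ k, f i = Sum.inl k)
        · rw [if_pos hgood]
          have hs0 : s = ∅ := by
            rw [Finset.eq_empty_iff_forall_notMem]
            intro i hi
            obtain ⟨k, hk⟩ := hgood.2 i
            rw [(hmem i).mp hi] at hk
            simp at hk
          rw [hs0]
          norm_num
        · rw [if_neg hgood]
          exact mul_self_nonneg _
      · obtain ⟨a, b, hfab, hab⟩ := Function.not_injective_iff.mp hinj
        have hA : a ∉ s := by
          intro ha
          have hfa : f b = Sum.inr a := by rw [← hfab, (hmem a).mp ha]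
          exact hab (hdiag b a hfa).symm
        have hB : b ∉ s := by
          intro hb
          have hfb : f a = Sum.inr b := by rw [hfab, (hmem b).mp hb]
          exact hab (hdiag a b hfb)
        rw [sum_sign_eq_zero f s _ a b hab hfab hA hB,
          if_neg (fun hg => hinj hg.1)]
  -- counting the good functions
  have hcount : ∑ f : Fin n → Fin m ⊕ Fin n,
      (if (Function.Injective f ∧ ∀ i, ∃ k, f i = Sum.inl k) then (1:ℝ) else 0)
      = (m.descFactorial n : ℝ) := by
    rw [Finset.sum_boole]
    have hcard : (Finset.univ.filter (fun f : Fin n → Fin m ⊕ Fin n =>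
        Function.Injective f ∧ ∀ i, ∃ k, f i = Sum.inl k)).card
        = Fintype.card (Fin n ↪ Fin m) := by
      rw [Fintype.card]
      symm
      apply Finset.card_bij (fun (e : Fin n ↪ Fin m) _ => Sum.inl ∘ e)
      · intro e _
        rw [Finset.mem_filter]
        exact ⟨Finset.mem_univ _, Sum.inl_injective.comp e.injective, fun i => ⟨e i, rfl⟩⟩
      · intro e1 _ e2 _ h
        apply DFunLike.ext
        intro i
        exact Sum.inl_injective (congrFun h i)
      · intro f hf
        rw [Finset.mem_filter] at hf
        obtain ⟨-, hinj, hall⟩ := hf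
        choose f0 hf0 using hall
        refine ⟨⟨f0, fun i j h => hinj (by rw [hf0 i, hf0 j, h])⟩, Finset.mem_univ _, ?_⟩
        funext i
        exact (hf0 i).symm
    rw [hcard, Fintype.card_embedding_eq]
    simp
  -- finish
  rw [hX]
  have hre2 : (∑ σ : Equiv.Perm (Fin n), ∑ f : Fin n → Fin m ⊕ Fin n,
      ((((Equiv.Perm.sign σ : ℤ) : ℂ) * (DAux c (f ∘ σ.symm) * DAux c f))
        * ∏ p : Fin n × Fin m, IvalAux (f ∘ σ.symm) f p)).re
      = ∑ f : Fin n → Fin m ⊕ Fin n, ∑ σ : Equiv.Perm (Fin n),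
          ((((Equiv.Perm.sign σ : ℤ) : ℂ) * (DAux c (f ∘ σ.symm) * DAux c f))
            * ∏ p : Fin n × Fin m, IvalAux (f ∘ σ.symm) f p).re := by
    rw [Complex.re_sum]
    simp only [Complex.re_sum]
    rw [Finset.sum_comm]
  rw [hre2, ← hcount]
  exact Finset.sum_le_sum fun f _ => hinner f

end Stmt7Aux

open MeasureTheory ProbabilityTheory Matrix Stmt7Aux in
theorem stmt_7 {Ω : Type*} [MeasurableSpace Ω] (μ : Measure Ω) [IsProbabilityMeasure μ]
    (n m : ℕ) (hnm : n ≤ m)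
    (M : Ω → Matrix (Fin n) (Fin m) ℂ)
    (hmeas : ∀ i j, Measurable (fun ω => M ω i j))
    (hindep : iIndepFun
      (fun (p : Fin n × Fin m) ω => M ω p.1 p.2) μ)
    (hmean : ∀ i j, ∫ ω, M ω i j ∂μ = 0)
    (hvar : ∀ i j, ∫ ω, ‖M ω i j‖ ^ 2 ∂μ = 1) :
    ∀ ε : ℝ, 0 ≤ ε →
      (m.factorial : ℝ) / ((m - n).factorial * (m : ℝ) ^ n)
        ≤ (∫ ω, ((ε : ℂ) • (1 : Matrix (Fin n) (Fin n) ℂ)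
              + ((m : ℂ))⁻¹ • (M ω * (M ω)ᴴ)).det ∂μ).re := by
  intro ε hε
  rcases Nat.eq_zero_or_pos n with hn | hn
  · subst hn
    have hdet1 : ∀ ω, ((ε : ℂ) • (1 : Matrix (Fin 0) (Fin 0) ℂ)
        + ((m : ℂ))⁻¹ • (M ω * (M ω)ᴴ)).det = 1 := fun ω => Matrix.det_isEmpty
    simp only [hdet1]
    rw [integral_const]
    simp only [measure_univ, probReal_univ, ENNReal.toReal_one, one_smul, Complex.one_re]
    rw [Nat.sub_zero, pow_zero, mul_one, div_self]
    exact_mod_cast Nat.factorial_pos m |>.ne'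
  · have hm : 0 < m := lt_of_lt_of_le hn hnm
    have hm' : (m : ℝ) ≠ 0 := Nat.cast_ne_zero.mpr hm.ne'
    have hmC : (m : ℂ) ≠ 0 := Nat.cast_ne_zero.mpr hm.ne'
    set c : ℝ := Real.sqrt (m * ε) with hc
    have hc2 : (c : ℂ) * (c : ℂ) = ((m : ℝ) * ε : ℝ) := by
      rw [← Complex.ofReal_mul]
      norm_cast
      exact Real.mul_self_sqrt (by positivity)
    set N : Ω → Matrix (Fin n) (Fin m ⊕ Fin n) ℂ :=
      fun ω => Matrix.of fun i k =>
        Sum.elim (M ω i) (fun j => if i = j then (c : ℂ) else 0) k with hNdef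
    have hN : ∀ ω i, N ω i = Sum.elim (M ω i) (fun j => if i = j then (c : ℂ) else 0) :=
      fun ω i => rfl
    have hc2' : (c : ℂ) * (c : ℂ) = (m : ℂ) * (ε : ℂ) := by
      rw [← Complex.ofReal_mul, show c * c = (m : ℝ) * ε from Real.mul_self_sqrt (by positivity)]
      push_cast
      ring
    -- matrix identity
    have hNN : ∀ ω, (ε : ℂ) • (1 : Matrix (Fin n) (Fin n) ℂ)
        + ((m : ℂ))⁻¹ • (M ω * (M ω)ᴴ) = ((m : ℂ))⁻¹ • (N ω * (N ω)ᴴ) := by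
      intro ω
      ext i i'
      have hterm : ∀ j : Fin n, N ω i (Sum.inr j) * star (N ω i' (Sum.inr j))
          = if i = j ∧ i' = j then (c:ℂ) * (c:ℂ) else 0 := by
        intro j
        rw [hN, hN]
        simp only [Sum.elim_inr]
        by_cases h1 : i = j <;> by_cases h2 : i' = j <;> simp [h1, h2]
      have hinr : (∑ j : Fin n, N ω i (Sum.inr j) * star (N ω i' (Sum.inr j)))
          = if i = i' then (m : ℂ) * (ε : ℂ) else 0 := by
        rw [Finset.sum_congr rfl fun j _ => hterm j]
        by_cases h : i = i'
        · subst h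
          rw [show (∑ j : Fin n, if i = j ∧ i = j then (c:ℂ)*(c:ℂ) else 0)
              = ∑ j : Fin n, if i = j then (c:ℂ)*(c:ℂ) else 0 from
            Finset.sum_congr rfl fun j _ => by by_cases h1 : i = j <;> simp [h1]]
          rw [Finset.sum_ite_eq Finset.univ i fun _ => (c:ℂ)*(c:ℂ)]
          simp [hc2']
        · rw [if_neg h]
          apply Finset.sum_eq_zero
          intro j _
          rw [if_neg]
          rintro ⟨h1, h2⟩
          exact h (h1.trans h2.symm)
      have hinl : (∑ k : Fin m, N ω i (Sum.inl k) * star (N ω i' (Sum.inl k)))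
          = (M ω * (M ω)ᴴ) i i' := by
        rw [Matrix.mul_apply]
        simp only [Matrix.conjTranspose_apply]
        refine Finset.sum_congr rfl fun k _ => ?_
        rw [hN, hN]
        rfl
      have hNNe : (N ω * (N ω)ᴴ) i i'
          = (M ω * (M ω)ᴴ) i i' + (if i = i' then (m : ℂ) * (ε : ℂ) else 0) := by
        rw [Matrix.mul_apply]
        simp only [Matrix.conjTranspose_apply]
        rw [Fintype.sum_sum_type, hinl, hinr]
      simp only [Matrix.add_apply, Matrix.smul_apply, Matrix.one_apply, smul_eq_mul, hNNe]
      rw [mul_add, add_comm]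
      congr 1
      · by_cases h : i = i'
        · rw [if_pos h, if_pos h, mul_one]
          rw [show (m:ℂ)⁻¹ * ((m:ℂ) * (ε:ℂ)) = ((m:ℂ)⁻¹ * (m:ℂ)) * (ε:ℂ) from by ring,
            inv_mul_cancel₀ hmC, one_mul]
        · rw [if_neg h, if_neg h, mul_zero, mul_zero]
    have hdetsmul : ∀ ω, (((m : ℂ))⁻¹ • (N ω * (N ω)ᴴ)).det
        = ((m : ℂ))⁻¹ ^ n * (N ω * (N ω)ᴴ).det := by
      intro ω
      rw [Matrix.det_smul]
      simp
    have hInt : (∫ ω, ((ε : ℂ) • (1 : Matrix (Fin n) (Fin n) ℂ)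
          + ((m : ℂ))⁻¹ • (M ω * (M ω)ᴴ)).det ∂μ)
        = ((m : ℂ))⁻¹ ^ n * ∫ ω, (N ω * (N ω)ᴴ).det ∂μ := by
      calc (∫ ω, ((ε : ℂ) • (1 : Matrix (Fin n) (Fin n) ℂ)
              + ((m : ℂ))⁻¹ • (M ω * (M ω)ᴴ)).det ∂μ)
          = ∫ ω, ((m : ℂ))⁻¹ ^ n * (N ω * (N ω)ᴴ).det ∂μ := by
            congr 1
            funext ω
            rw [hNN ω, hdetsmul ω]
        _ = _ := integral_const_mul _ _
    rw [hInt]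
    have hkey := key μ n m M hmeas hindep hmean hvar c N hN
    have hcast : ((m : ℂ))⁻¹ ^ n = ((((m : ℝ) ^ n)⁻¹ : ℝ) : ℂ) := by
      push_cast
      norm_num
    rw [hcast, Complex.re_ofReal_mul]
    have hfact : (m.factorial : ℝ) = ((m - n).factorial : ℝ) * (m.descFactorial n : ℝ) := by
      exact_mod_cast congrArg Nat.cast (Nat.factorial_mul_descFactorial hnm).symm
    rw [hfact]
    have hfpos : (0:ℝ) < ((m - n).factorial : ℝ) := by exact_mod_cast Nat.factorial_pos _
    have hmn : (0:ℝ) < (m:ℝ) ^ n := by positivity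
    rw [mul_div_mul_left _ _ hfpos.ne', div_eq_inv_mul]
    exact mul_le_mul_of_nonneg_left hkey (inv_nonneg.mpr hmn.le)
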